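/- arXiv:2312.12358 — 4 statements merged into one kernel-verified Lean document; each statement's English description precedes it below -/
import Mathlib

section
/- Let b ≥ 1, K ≥ 1, L ≥ 1 be integers and let g_1, …, g_L ∈ ℂ^K. Suppose ψ* = (ψ*_1, …, ψ*_L), with each ψ*_ℓ ∈ F_b^K, maximizes the passive beamforming gain F(ψ) = Σ_{ℓ=1}^L |ψ_ℓᵀ g_ℓ|² over all configurations ψ with ψ_ℓ ∈ F_b^K for every ℓ. Then for every ℓ ∈ {1, …, L} and every partition {S₁, S₂} of {1, …, K} (S₁ ∩ S₂ = ∅, S₁ ∪ S₂ = {1, …, K}) such that the two partial sums I₁ = Σ_{k ∈ S₁} ψ*_{ℓ,k} g_{ℓ,k} and I₂ = Σ_{k ∈ S₂} ψ*_{ℓ,k} g_{ℓ,k} are both nonzero, one has A(I₁, I₂) ≤ π/2^b. -/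
open scoped Real

/-- Internal angle between two complex numbers:
`A(x, y) = π − | |arg x − arg y| − π |`. -/
noncomputable def intAngle (x y : ℂ) : ℝ :=
  π - |(|Complex.arg x - Complex.arg y|) - π|

/-- The candidate discrete RIS reflection coefficients: the `2^b`-th roots of unity. -/
def Fb (b : ℕ) : Set ℂ :=
  {z | ∃ s : ℕ, s < 2 ^ b ∧ z = Complex.exp (2 * π * Complex.I * s / 2 ^ b)}

/-- Passive beamforming gain `F(ψ) = Σ_ℓ |ψ_ℓᵀ g_ℓ|²`. -/
noncomputable def gain {K L : ℕ} (g ψ : Fin L → Fin K → ℂ) : ℝ :=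
  ∑ ℓ, ‖∑ k, ψ ℓ k * g ℓ k‖ ^ 2

lemma mem_Fb_iff {b : ℕ} {z : ℂ} : z ∈ Fb b ↔ z ^ (2 ^ b) = 1 := by
  constructor
  · rintro ⟨s, hs, rfl⟩
    rw [← Complex.exp_nat_mul]
    rw [show ((2 ^ b : ℕ) : ℂ) * (2 * π * Complex.I * s / 2 ^ b) = s * (2 * π * Complex.I) by
      have h : ((2 : ℂ)) ^ b ≠ 0 := pow_ne_zero _ two_ne_zero
      push_cast
      field_simp]
    exact Complex.exp_nat_mul_two_pi_mul_I s
  · intro hz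
    haveI : NeZero (2 ^ b) := ⟨pow_ne_zero _ two_ne_zero⟩
    obtain ⟨i, hi, hiz⟩ :=
      (Complex.isPrimitiveRoot_exp (2 ^ b) (pow_ne_zero _ two_ne_zero)).eq_pow_of_pow_eq_one hz
    refine ⟨i, hi, ?_⟩
    rw [← hiz, ← Complex.exp_nat_mul]
    congr 1
    push_cast
    ring

lemma intAngle_le {x y : ℂ} (hx : x ≠ 0) (hy : y ≠ 0) :
    intAngle x y ≤ |Complex.arg (x * (starRingEnd ℂ) y)| := by
  have hy' : (starRingEnd ℂ) y ≠ 0 := by simpa using hy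
  have hang : ((Complex.arg (x * (starRingEnd ℂ) y)) : Real.Angle)
      = (Complex.arg x - Complex.arg y : ℝ) := by
    rw [Complex.arg_mul_coe_angle hx hy', Complex.arg_conj_coe_angle]
    rw [sub_eq_add_neg, Real.Angle.coe_add, Real.Angle.coe_neg]
  obtain ⟨k, hk⟩ := Real.Angle.angle_eq_iff_two_pi_dvd_sub.mp hang
  set a := Complex.arg (x * (starRingEnd ℂ) y) with ha
  set d := Complex.arg x - Complex.arg y with hd
  have h1 := Complex.neg_pi_lt_arg x
  have h2 := Complex.arg_le_pi x
  have h3 := Complex.neg_pi_lt_arg y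
  have h4 := Complex.arg_le_pi y
  have h5 := Complex.neg_pi_lt_arg (x * (starRingEnd ℂ) y)
  have h6 := Complex.arg_le_pi (x * (starRingEnd ℂ) y)
  have hpi := Real.pi_pos
  have hk2 : (k : ℝ) < 2 := by nlinarith
  have hk3 : (-2 : ℝ) < k := by nlinarith
  have hk2' : k ≤ 1 := by
    have : k < 2 := by exact_mod_cast hk2
    omega
  have hk3' : -1 ≤ k := by
    have : -2 < k := by exact_mod_cast hk3
    omega
  unfold intAngle
  rw [← hd]
  interval_cases k <;>
  · push_cast at hk
    rcases abs_cases d with ⟨e1, e2⟩ | ⟨e1, e2⟩ <;>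
      rcases abs_cases a with ⟨f1, f2⟩ | ⟨f1, f2⟩ <;>
        rcases abs_cases (|d| - π) with ⟨g1, g2⟩ | ⟨g1, g2⟩ <;> linarith

theorem stmt0 {b K L : ℕ} (hb : 1 ≤ b) (hK : 1 ≤ K) (hL : 1 ≤ L)
    (g : Fin L → Fin K → ℂ) (ψstar : Fin L → Fin K → ℂ)
    (hmem : ∀ ℓ k, ψstar ℓ k ∈ Fb b)
    (hmax : ∀ ψ : Fin L → Fin K → ℂ, (∀ ℓ k, ψ ℓ k ∈ Fb b) →
      gain g ψ ≤ gain g ψstar) :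
    ∀ (ℓ : Fin L) (S₁ S₂ : Finset (Fin K)),
      Disjoint S₁ S₂ → S₁ ∪ S₂ = Finset.univ →
      (∑ k ∈ S₁, ψstar ℓ k * g ℓ k) ≠ 0 →
      (∑ k ∈ S₂, ψstar ℓ k * g ℓ k) ≠ 0 →
      intAngle (∑ k ∈ S₁, ψstar ℓ k * g ℓ k) (∑ k ∈ S₂, ψstar ℓ k * g ℓ k)
        ≤ π / 2 ^ b := by
  intro ℓ S₁ S₂ hdisj hun hI₁ hI₂
  by_contra hcon
  push_neg at hcon
  set I₁ := ∑ k ∈ S₁, ψstar ℓ k * g ℓ k with hI₁def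
  set I₂ := ∑ k ∈ S₂, ψstar ℓ k * g ℓ k with hI₂def
  set w := I₁ * (starRingEnd ℂ) I₂ with hwdef
  have hw : w ≠ 0 := mul_ne_zero hI₁ (by simpa using hI₂)
  set φ := Complex.arg w with hφdef
  set α := π / 2 ^ b with hαdef
  have hpi := Real.pi_pos
  have hNpos : (0:ℝ) < 2 ^ b := by positivity
  have hαpos : 0 < α := by positivity
  have h2b : (2:ℝ) ≤ 2 ^ b := by
    calc (2:ℝ) = 2 ^ 1 := (pow_one 2).symm
    _ ≤ 2 ^ b := by exact pow_le_pow_right₀ one_le_two hb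
  have h2α : 2 * α ≤ π := by
    rw [hαdef, show 2 * (π / 2 ^ b) = 2 * π / 2 ^ b by ring, div_le_iff₀ hNpos]
    nlinarith
  have hφα : α < |φ| := lt_of_lt_of_le hcon (intAngle_le hI₁ hI₂)
  have hφle : φ ≤ π := Complex.arg_le_pi w
  have hφgt : -π < φ := Complex.neg_pi_lt_arg w
  -- choose rotation
  set t : ℝ := if 0 ≤ φ then -(2*α) else 2*α with htdef
  have hcos : Real.cos φ < Real.cos (φ + t) := by
    by_cases hφ0 : 0 ≤ φ
    · have hφα' : α < φ := by rwa [abs_of_nonneg hφ0] at hφα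
      rw [htdef, if_pos hφ0]
      have h1 : |φ + -(2*α)| < φ := by
        rw [abs_lt]; constructor <;> linarith
      have := Real.cos_lt_cos_of_nonneg_of_le_pi (abs_nonneg (φ + -(2*α))) hφle h1
      rwa [Real.cos_abs] at this
    · push_neg at hφ0
      have hφα' : φ < -α := by
        rw [abs_of_neg hφ0] at hφα; linarith
      rw [htdef, if_neg (not_le.mpr hφ0)]
      have h1 : |φ + 2*α| < -φ := by
        rw [abs_lt]; constructor <;> linarith
      have h2 : -φ ≤ π := by linarith
      have := Real.cos_lt_cos_of_nonneg_of_le_pi (abs_nonneg (φ + 2*α)) h2 h1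
      rwa [Real.cos_abs, Real.cos_neg] at this
  set c : ℂ := Complex.exp (t * Complex.I) with hcdef
  have hcN : c ^ (2 ^ b) = 1 := by
    rw [hcdef, ← Complex.exp_nat_mul]
    have hNt : ((2:ℝ) ^ b) * t = 2*π ∨ ((2:ℝ) ^ b) * t = -(2*π) := by
      rw [htdef]
      by_cases hφ0 : 0 ≤ φ
      · right; rw [if_pos hφ0, hαdef]; field_simp; try ring
      · left; rw [if_neg hφ0, hαdef]; field_simp; try ring
    rcases hNt with hNt | hNt
    · rw [show ((2^b : ℕ) : ℂ) * (↑t * Complex.I) = ((((2:ℝ)^b) * t : ℝ) : ℂ) * Complex.I by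
        push_cast; ring, hNt]
      push_cast
      exact Complex.exp_two_pi_mul_I
    · rw [show ((2^b : ℕ) : ℂ) * (↑t * Complex.I) = ((((2:ℝ)^b) * t : ℝ) : ℂ) * Complex.I by
        push_cast; ring, hNt]
      push_cast
      rw [show (-(2*(π:ℂ))) * Complex.I = -(2*π*Complex.I) by ring, Complex.exp_neg,
        Complex.exp_two_pi_mul_I, inv_one]
  -- real part improvement
  have hre : w.re < (c * w).re := by
    have habs : (↑‖w‖ : ℂ) * Complex.exp (↑φ * Complex.I) = w :=
      Complex.norm_mul_exp_arg_mul_I w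
    have hcw : c * w = (↑‖w‖ : ℂ) * Complex.exp (↑(φ + t) * Complex.I) := by
      calc c * w = (↑‖w‖ : ℂ)
            * (Complex.exp (↑t * Complex.I) * Complex.exp (↑φ * Complex.I)) := by
            conv_lhs => rw [← habs]
            rw [hcdef]; ring
        _ = (↑‖w‖ : ℂ) * Complex.exp (↑(φ + t) * Complex.I) := by
            rw [← Complex.exp_add]; congr 1; push_cast; ring
    have h1 : (c * w).re = ‖w‖ * Real.cos (φ + t) := by
      rw [hcw, Complex.re_ofReal_mul, Complex.exp_ofReal_mul_I_re]
    have h2 : w.re = ‖w‖ * Real.cos φ := by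
      conv_lhs => rw [← habs]
      rw [Complex.re_ofReal_mul, Complex.exp_ofReal_mul_I_re]
    rw [h1, h2]
    exact mul_lt_mul_of_pos_left hcos (norm_pos_iff.mpr hw)
  -- the perturbed configuration
  set ψ' : Fin L → Fin K → ℂ :=
    fun ℓ' k => if ℓ' = ℓ ∧ k ∈ S₁ then c * ψstar ℓ' k else ψstar ℓ' k with hψ'def
  have hmem' : ∀ ℓ' k, ψ' ℓ' k ∈ Fb b := by
    intro ℓ' k
    simp only [hψ'def]
    split_ifs with h
    · rw [mem_Fb_iff, mul_pow, hcN, one_mul, ← mem_Fb_iff]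
      exact hmem ℓ' k
    · exact hmem ℓ' k
  have hsumℓ : ∑ k, ψ' ℓ k * g ℓ k = c * I₁ + I₂ := by
    rw [show (Finset.univ : Finset (Fin K)) = S₁ ∪ S₂ from hun.symm,
      Finset.sum_union hdisj]
    congr 1
    · rw [hI₁def, Finset.mul_sum]
      refine Finset.sum_congr rfl fun k hk => ?_
      simp only [hψ'def]
      split_ifs with h
      · ring
      · simp [hk] at h
    · refine Finset.sum_congr rfl fun k hk => ?_
      simp only [hψ'def]
      split_ifs with h
      · exact absurd h.2 (Finset.disjoint_right.mp hdisj hk)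
      · rfl
  have hsum' : ∀ ℓ' : Fin L, ℓ' ≠ ℓ → ∑ k, ψ' ℓ' k * g ℓ' k = ∑ k, ψstar ℓ' k * g ℓ' k := by
    intro ℓ' hne
    refine Finset.sum_congr rfl fun k _ => ?_
    simp only [hψ'def]
    split_ifs with h
    · exact absurd h.1 hne
    · rfl
  -- gains
  have hterm : ‖∑ k, ψstar ℓ k * g ℓ k‖ ^ 2
      < ‖∑ k, ψ' ℓ k * g ℓ k‖ ^ 2 := by
    rw [hsumℓ]
    rw [show (∑ k, ψstar ℓ k * g ℓ k) = I₁ + I₂ by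
      rw [show (Finset.univ : Finset (Fin K)) = S₁ ∪ S₂ from hun.symm,
        Finset.sum_union hdisj]]
    rw [Complex.sq_norm, Complex.sq_norm, Complex.normSq_add, Complex.normSq_add,
      Complex.normSq_mul]
    have hc1 : Complex.normSq c = 1 := by
      rw [hcdef, Complex.normSq_eq_norm_sq, Complex.norm_exp_ofReal_mul_I]; norm_num
    rw [hc1, one_mul]
    have : (c * I₁ * (starRingEnd ℂ) I₂).re = (c * w).re := by rw [hwdef]; ring_nf
    rw [this, ← hwdef]
    linarith
  have hgain : gain g ψstar < gain g ψ' := by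
    unfold gain
    have e1 := Finset.sum_erase_add Finset.univ
      (fun ℓ' => ‖∑ k, ψ' ℓ' k * g ℓ' k‖ ^ 2) (Finset.mem_univ ℓ)
    have e2 := Finset.sum_erase_add Finset.univ
      (fun ℓ' => ‖∑ k, ψstar ℓ' k * g ℓ' k‖ ^ 2) (Finset.mem_univ ℓ)
    rw [← e1, ← e2]
    have heq : ∑ ℓ' ∈ Finset.univ.erase ℓ, ‖∑ k, ψ' ℓ' k * g ℓ' k‖ ^ 2
        = ∑ ℓ' ∈ Finset.univ.erase ℓ, ‖∑ k, ψstar ℓ' k * g ℓ' k‖ ^ 2 := by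
      refine Finset.sum_congr rfl fun ℓ' hℓ' => ?_
      rw [hsum' ℓ' (Finset.ne_of_mem_erase hℓ')]
    rw [heq]
    exact add_lt_add_right hterm _
  exact absurd (hmax ψ' hmem') (not_le.mpr hgain)
end

section
/- Let b ≥ 1, K ≥ 1 be integers and let g ∈ ℂ^K have all entries g_k nonzero. Let ψ ∈ F_b^K satisfy ψᵀg = Σ_{k=1}^K ψ_k g_k ≠ 0, and suppose that for every partition {S₁, S₂} of {1, …, K} for which the partial sums Σ_{k ∈ S₁} ψ_k g_k and Σ_{k ∈ S₂} ψ_k g_k are both nonzero, one has A(Σ_{k ∈ S₁} ψ_k g_k, Σ_{k ∈ S₂} ψ_k g_k) ≤ π/2^b. Then, setting ω = arg(ψᵀg), for every k ∈ {1, …, K} it holds that ψ_k = exp(i·(2π/2^b)·round(−(2^b/(2π))·arg(g_k) + (2^b/(2π))·ω)), i.e., ψ_k = ψ̂_{g_k}(ω). -/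
open scoped Real

/-- The ω-beamformer phase
`ψ̂_g(ω) = exp(i·(2π/2^b)·round(−(2^b/(2π))·arg g + (2^b/(2π))·ω))`. -/
noncomputable def psiHat (b : ℕ) (g : ℂ) (ω : ℝ) : ℂ :=
  Complex.exp (Complex.I * ((2 * π / 2 ^ b : ℝ) : ℂ) *
    ((round ((-(2 ^ b / (2 * π)) * Complex.arg g + (2 ^ b / (2 * π)) * ω : ℝ)) : ℤ) : ℂ))

lemma tan_abs {x : ℝ} (hx : |x| < π/2) : Real.tan |x| = |Real.tan x| := by
  rcases abs_cases x with ⟨h1, h2⟩ | ⟨h1, h2⟩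
  · rw [h1, abs_of_nonneg (Real.tan_nonneg_of_nonneg_of_le_pi_div_two h2 (by rw [h1] at hx; linarith))]
  · rw [h1, Real.tan_neg, abs_of_neg (Real.tan_neg_of_neg_of_pi_div_two_lt h2 (by rw [h1] at hx; linarith))]

lemma abs_lt_abs_of_tan {a c : ℝ} (ha : |a| < π/2) (hc : |c| < π/2)
    (h : |Real.tan a| < |Real.tan c|) : |a| < |c| := by
  by_contra hle
  push_neg at hle
  have := Real.strictMonoOn_tan.monotoneOn
    ⟨by linarith [abs_nonneg c, Real.pi_pos], hc⟩
    ⟨by linarith [abs_nonneg a, Real.pi_pos], ha⟩ hle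
  rw [tan_abs ha, tan_abs hc] at this
  linarith

lemma arg_one_add_lt {θ : ℝ} (hθ0 : 0 < θ) (hθ : θ ≤ π/2) (w : ℂ)
    (hw : w = 0 ∨ |Complex.arg w| ≤ θ) : |Complex.arg (1 + w)| < θ := by
  rcases hw with rfl | hw
  · simpa using hθ0
  · have hre : 0 ≤ w.re := Complex.abs_arg_le_pi_div_two_iff.mp (hw.trans hθ)
    have hre1 : 0 < (1 + w).re := by simp [Complex.add_re]; linarith
    have hlt : |Complex.arg (1 + w)| < π/2 :=
      Complex.abs_arg_lt_pi_div_two_iff.mpr (Or.inl hre1)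
    by_cases him : w.im = 0
    · have h0 : Complex.arg (1 + w) = 0 :=
        Complex.arg_eq_zero_iff.mpr ⟨le_of_lt hre1, by simp [Complex.add_im, him]⟩
      rw [h0]; simpa using hθ0
    · rcases eq_or_lt_of_le hre with hre0 | hrepos
      · have habs : |Complex.arg w| = π/2 := by
          rcases lt_or_gt_of_ne him with h | h
          · rw [Complex.arg_eq_neg_pi_div_two_iff.mpr ⟨hre0.symm, h⟩, abs_neg,
              abs_of_nonneg (by positivity)]
          · rw [Complex.arg_eq_pi_div_two_iff.mpr ⟨hre0.symm, h⟩,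
              abs_of_nonneg (by positivity)]
        have hθ2 : θ = π/2 := le_antisymm hθ (habs ▸ hw)
        rw [hθ2]; exact hlt
      · have hcw : |Complex.arg w| < π/2 :=
          Complex.abs_arg_lt_pi_div_two_iff.mpr (Or.inl hrepos)
        have h1 : Real.tan (Complex.arg (1 + w)) = w.im / (1 + w.re) := by
          rw [Complex.tan_arg]; simp [Complex.add_im, Complex.add_re]
        have h2 : Real.tan (Complex.arg w) = w.im / w.re := Complex.tan_arg w
        have hlt2 : |Real.tan (Complex.arg (1 + w))| < |Real.tan (Complex.arg w)| := by
          rw [h1, h2, abs_div, abs_div,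
            abs_of_pos (show (0:ℝ) < 1 + w.re by linarith), abs_of_pos hrepos]
          exact (div_lt_div_iff_of_pos_left (abs_pos.mpr him)
            (show (0:ℝ) < 1 + w.re by linarith) hrepos).mpr (by linarith)
        exact lt_of_lt_of_le (abs_lt_abs_of_tan hlt hcw hlt2) hw

lemma intAngle_eq' {x y : ℂ} (hx : x ≠ 0) (hy : y ≠ 0) :
    π - |(|Complex.arg x - Complex.arg y|) - π| = |Complex.arg (x / y)| := by
  have h := Complex.arg_div_coe_angle hx hy
  rw [← Real.Angle.coe_sub] at h
  obtain ⟨k, hk⟩ := Real.Angle.angle_eq_iff_two_pi_dvd_sub.mp h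
  have b1 := Complex.arg_le_pi (x/y); have b2 := Complex.neg_pi_lt_arg (x/y)
  have b3 := Complex.arg_le_pi x; have b4 := Complex.neg_pi_lt_arg x
  have b5 := Complex.arg_le_pi y; have b6 := Complex.neg_pi_lt_arg y
  have hπ := Real.pi_pos
  have hkl : -1 ≤ k := by
    by_contra hcon; push_neg at hcon
    have h2' : k ≤ -2 := by omega
    have : (k:ℝ) ≤ -2 := by exact_mod_cast h2'
    nlinarith
  have hku : k ≤ 1 := by
    by_contra hcon; push_neg at hcon
    have h2' : 2 ≤ k := by omega
    have : (2:ℝ) ≤ k := by exact_mod_cast h2'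
    nlinarith
  interval_cases k <;>
    rcases abs_cases (Complex.arg x - Complex.arg y) with ⟨h1, h2⟩ | ⟨h1, h2⟩ <;>
    rcases abs_cases (Complex.arg (x/y)) with ⟨h3, h4⟩ | ⟨h3, h4⟩ <;>
    rcases abs_cases (|Complex.arg x - Complex.arg y| - π) with ⟨h5, h6⟩ | ⟨h5, h6⟩ <;>
    push_cast at hk <;> linarith

lemma exists_arg_exp (θ : ℝ) : ∃ m : ℤ, Complex.arg (Complex.exp (θ * Complex.I)) = θ - 2*π*m := by
  rw [Complex.arg_exp_mul_I]
  refine ⟨toIocDiv (mul_pos two_pos Real.pi_pos) (-π) θ, ?_⟩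
  rw [← self_sub_toIocDiv_zsmul, zsmul_eq_mul]; ring


theorem stmt1 {b K : ℕ} (hb : 1 ≤ b) (hK : 1 ≤ K)
    (g : Fin K → ℂ) (hg : ∀ k, g k ≠ 0)
    (ψ : Fin K → ℂ) (hmem : ∀ k, ψ k ∈ Fb b)
    (hne : (∑ k, ψ k * g k) ≠ 0)
    (hang : ∀ S₁ S₂ : Finset (Fin K),
      Disjoint S₁ S₂ → S₁ ∪ S₂ = Finset.univ →
      (∑ k ∈ S₁, ψ k * g k) ≠ 0 → (∑ k ∈ S₂, ψ k * g k) ≠ 0 →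
      intAngle (∑ k ∈ S₁, ψ k * g k) (∑ k ∈ S₂, ψ k * g k) ≤ π / 2 ^ b) :
    ∀ k, ψ k = psiHat b (g k) (Complex.arg (∑ k, ψ k * g k)) := by
  intro k
  classical
  have hπ := Real.pi_pos
  set T := ∑ j, ψ j * g j with hTdef
  set u := ψ k * g k with hudef
  set R := ∑ j ∈ Finset.univ.erase k, ψ j * g j with hRdef
  have hTuR : T = u + R := by
    rw [hTdef, hudef, hRdef, ← Finset.add_sum_erase _ _ (Finset.mem_univ k)]
  -- facts about ψ k
  obtain ⟨s, -, hψs⟩ := hmem k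
  have hψform : ψ k = Complex.exp (((2*π*s/2^b : ℝ) : ℂ) * Complex.I) := by
    rw [hψs]; congr 1; push_cast; ring
  have hψ0 : ψ k ≠ 0 := by rw [hψform]; exact Complex.exp_ne_zero _
  have hu0 : u ≠ 0 := mul_ne_zero hψ0 (hg k)
  have habs : ‖ψ k‖ = 1 := by
    rw [hψform, Complex.norm_exp]
    have him : (((2 * π * (s:ℝ) / 2 ^ b : ℝ) : ℂ) * Complex.I).re = 0 := by
      rw [Complex.mul_re, Complex.I_re, Complex.I_im, Complex.ofReal_re, Complex.ofReal_im]; ring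
    rw [him, Real.exp_zero]
  obtain ⟨m, hm⟩ := exists_arg_exp (2*π*s/2^b)
  rw [← hψform] at hm
  -- the angle bound
  have h2b : (2:ℝ) ≤ 2^b := by
    calc (2:ℝ) = 2^1 := by norm_num
    _ ≤ 2^b := by exact pow_le_pow_right₀ one_le_two hb
  have h2bpos : (0:ℝ) < 2^b := by positivity
  have hθpos : 0 < π / 2^b := by positivity
  have hθle : π / 2^b ≤ π/2 := by
    rw [div_le_div_iff₀ h2bpos (by norm_num)]; nlinarith
  have hT0 : T ≠ 0 := hne
  have hd : |Complex.arg (T / u)| < π / 2^b := by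
    rcases eq_or_ne R 0 with h0 | h0
    · have hone : T / u = 1 := by rw [hTuR, h0, add_zero, div_self hu0]
      rw [hone]; simpa using hθpos
    · have hA := hang {k} (Finset.univ.erase k) (by simp)
        (by rw [← Finset.insert_eq, Finset.insert_erase (Finset.mem_univ k)])
        (by rw [Finset.sum_singleton]; exact hu0)
        (by exact h0)
      rw [Finset.sum_singleton] at hA
      have hAeq : intAngle u R = |Complex.arg (u / R)| := intAngle_eq' hu0 h0
      have hwa : |Complex.arg (R / u)| ≤ π / 2^b := by
        rw [show R / u = (u / R)⁻¹ by rw [inv_div], Complex.abs_arg_inv]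
        rw [hAeq] at hA; exact hA
      have h1w : T / u = 1 + R / u := by rw [hTuR]; field_simp
      rw [h1w]
      exact arg_one_add_lt hθpos hθle _ (Or.inr hwa)
  -- angle relations
  obtain ⟨p, hp⟩ : ∃ p : ℤ,
      Complex.arg (T / u) - (Complex.arg T - Complex.arg u) = 2*π*p := by
    have h := Complex.arg_div_coe_angle hT0 hu0
    rw [← Real.Angle.coe_sub] at h
    exact Real.Angle.angle_eq_iff_two_pi_dvd_sub.mp h
  obtain ⟨l, hl⟩ : ∃ l : ℤ,
      Complex.arg u - (Complex.arg (ψ k) + Complex.arg (g k)) = 2*π*l := by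
    have h := Complex.arg_mul_coe_angle hψ0 (hg k)
    rw [← Real.Angle.coe_add] at h
    exact Real.Angle.angle_eq_iff_two_pi_dvd_sub.mp h
  -- the rounding computation
  set ω := Complex.arg T with hωdef
  set d := Complex.arg (T / u) with hddef
  set N : ℤ := (s : ℤ) - 2^b * m + 2^b * l - 2^b * p with hNdef
  have hc : -(2 ^ b / (2 * π)) * Complex.arg (g k) + 2 ^ b / (2 * π) * ω
      = (N : ℝ) + 2^b / (2*π) * d := by
    have hω : ω = (2*π*s/2^b - 2*π*m) + Complex.arg (g k) + 2*π*l + d - 2*π*p := by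
      rw [← hm]; linarith
    rw [hω, hNdef]
    push_cast
    field_simp
    ring
  have hx : |2^b / (2*π) * d| < 1/2 := by
    rw [abs_mul, abs_of_pos (show (0:ℝ) < 2^b/(2*π) by positivity)]
    calc 2^b/(2*π) * |d| < 2^b/(2*π) * (π/2^b) := by
          exact mul_lt_mul_of_pos_left hd (by positivity)
    _ = 1/2 := by field_simp
  have hround : round (-(2 ^ b / (2 * π)) * Complex.arg (g k) + 2 ^ b / (2 * π) * ω) = N := by
    rw [hc, add_comm, round_add_intCast, round_eq_zero_iff.mpr ?_, zero_add]
    constructor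
    · linarith [abs_lt.mp hx |>.1]
    · linarith [abs_lt.mp hx |>.2]
  -- conclude
  have hfin : ψ k = Complex.exp ((Complex.arg (ψ k) : ℂ) * Complex.I) := by
    conv_lhs => rw [← Complex.norm_mul_exp_arg_mul_I (ψ k)]
    rw [habs]; simp
  unfold psiHat
  rw [hround, hfin]
  rw [Complex.exp_eq_exp_iff_exists_int]
  refine ⟨p - l, ?_⟩
  have key : (Complex.arg (ψ k) : ℝ) = 2*π/2^b * (N:ℝ) + 2*π*((p:ℝ) - l) := by
    rw [hm, hNdef]; push_cast; field_simp; ring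
  rw [key]
  push_cast
  ring
end

section
/- Let b ≥ 1, K ≥ 1, L ≥ 1 be integers and let g_1, …, g_L ∈ ℂ^K have all entries g_{ℓ,k} nonzero. For ω ∈ [0, 2π) define the vector ψ_ℓ(ω) ∈ F_b^K componentwise by (ψ_ℓ(ω))_k = ψ̂_{g_{ℓ,k}}(ω). Suppose that for each ℓ ∈ {1, …, L}, ω*_ℓ ∈ [0, 2π) maximizes |ψ_ℓ(ω)ᵀ g_ℓ|² over ω ∈ [0, 2π). Then the configuration (ψ_1(ω*_1), …, ψ_L(ω*_L)) maximizes the passive beamforming gain F(ψ) = Σ_{ℓ=1}^L |ψ_ℓᵀ g_ℓ|² over all configurations ψ with ψ_ℓ ∈ F_b^K for every ℓ. -/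
open scoped Real

lemma round_nearest (x : ℝ) (m : ℤ) : |(round x : ℝ) - x| ≤ |(m : ℝ) - x| := by
  rcases eq_or_ne m (round x) with h | h
  · simp [h]
  · have h1 : |x - round x| ≤ 1/2 := abs_sub_round x
    have h2 : (1:ℝ) ≤ |(m : ℝ) - round x| := by
      rw [← Int.cast_sub]
      exact_mod_cast Int.one_le_abs (sub_ne_zero.mpr h)
    have := abs_sub_abs_le_abs_sub ((m:ℝ) - round x) ((m:ℝ) - x)
    have h3 : |(m:ℝ) - (round x : ℝ) - ((m:ℝ) - x)| = |(round x:ℝ) - x| := by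
      rw [show (m:ℝ) - (round x : ℝ) - ((m:ℝ) - x) = -((round x:ℝ) - x) by ring, abs_neg]
    rw [abs_sub_comm x (round x)] at h1
    linarith
lemma cos_key (b : ℕ) (hb : 1 ≤ b) (x : ℝ) (s : ℤ) :
    Real.cos (2 * π / 2 ^ b * ((s : ℝ) - x)) ≤
      Real.cos (2 * π / 2 ^ b * ((round x : ℝ) - x)) := by
  set δ : ℝ := 2 * π / 2 ^ b with hδdef
  have h2b : (2:ℝ) ≤ 2 ^ b := by exact_mod_cast Nat.one_lt_two_pow_iff.mpr (by omega)
  have hδ : 0 < δ := by have := Real.pi_pos; positivity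
  have hδπ : δ ≤ π := by
    rw [hδdef, div_le_iff₀ (by positivity)]
    nlinarith [Real.pi_pos]
  have hδn : δ * 2 ^ b = 2 * π := by
    rw [hδdef]; field_simp
  have h2π : (0:ℝ) < 2 * π := by positivity
  set a : ℝ := δ * ((s : ℝ) - x) with ha
  set r : ℝ := toIocMod h2π (-π) a with hr
  have hmem' := toIocMod_mem_Ioc h2π (-π) a
  have hmem : r ∈ Set.Ioc (-π) π := by
    rw [hr]; rw [show -π + 2 * π = π by ring] at hmem'; exact hmem'
  set k : ℤ := toIocDiv h2π (-π) a with hk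
  have hak : a - r = k * (2 * π) := by
    rw [hr, hk]
    simpa [zsmul_eq_mul] using self_sub_toIocMod h2π (-π) a
  have hcos_ar : Real.cos a = Real.cos r := by
    have : a = r + k * (2 * π) := by linarith
    rw [this, Real.cos_add_int_mul_two_pi]
  have hrm : r = δ * (((s - k * 2 ^ b : ℤ) : ℝ) - x) := by
    have h1 : r = a - k * (2 * π) := by linarith
    have h2 : ((2:ℝ)⁻¹) ^ b * 2 ^ b = 1 := by
      rw [← mul_pow]; norm_num
    rw [h1, ha, hδdef]
    have hne : (2:ℝ) ^ b ≠ 0 := by positivity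
    push_cast
    field_simp
    ring
  set m : ℤ := s - k * 2 ^ b with hm
  have habs_r : |r| = δ * |(m : ℝ) - x| := by rw [hrm, abs_mul, abs_of_pos hδ]
  have habs_c : |δ * ((round x : ℝ) - x)| = δ * |(round x : ℝ) - x| := by
    rw [abs_mul, abs_of_pos hδ]
  have hle : |δ * ((round x : ℝ) - x)| ≤ |r| := by
    rw [habs_r, habs_c]
    exact mul_le_mul_of_nonneg_left (round_nearest x m) hδ.le
  have hrπ : |r| ≤ π := abs_le.mpr ⟨hmem.1.le, hmem.2⟩
  calc Real.cos a = Real.cos r := hcos_ar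
    _ = Real.cos |r| := (Real.cos_abs r).symm
    _ ≤ Real.cos |δ * ((round x : ℝ) - x)| :=
        Real.cos_le_cos_of_nonneg_of_le_pi (abs_nonneg _) hrπ hle
    _ = Real.cos (δ * ((round x : ℝ) - x)) := Real.cos_abs _
lemma re_eq (g : ℂ) (φ ω : ℝ) :
    (Complex.exp (-(ω : ℂ) * Complex.I) * (Complex.exp ((φ : ℂ) * Complex.I) * g)).re
      = ‖g‖ * Real.cos (φ + Complex.arg g - ω) := by
  conv_lhs => rw [← Complex.norm_mul_exp_arg_mul_I g]
  have h : Complex.exp (-(ω:ℂ) * Complex.I) *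
      (Complex.exp ((φ:ℂ) * Complex.I) *
        ((‖g‖ : ℂ) * Complex.exp ((Complex.arg g : ℂ) * Complex.I)))
      = (‖g‖ : ℂ) * Complex.exp (((φ + Complex.arg g - ω : ℝ) : ℂ) * Complex.I) := by
    rw [show ((φ + Complex.arg g - ω : ℝ) : ℂ) * Complex.I
        = -(ω:ℂ) * Complex.I + ((φ:ℂ) * Complex.I + (Complex.arg g : ℂ) * Complex.I) by
      push_cast; ring, Complex.exp_add, Complex.exp_add]
    ring
  rw [h, Complex.re_ofReal_mul, Complex.exp_ofReal_mul_I_re]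
lemma key_re (b : ℕ) (hb : 1 ≤ b) (g : ℂ) (ω : ℝ) (z : ℂ) (hz : z ∈ Fb b) :
    (Complex.exp (-(ω : ℂ) * Complex.I) * (z * g)).re ≤
      (Complex.exp (-(ω : ℂ) * Complex.I) * (psiHat b g ω * g)).re := by
  obtain ⟨s, hs, rfl⟩ := hz
  obtain ⟨δ, hδdef⟩ : ∃ δ : ℝ, δ = 2 * π / 2 ^ b := ⟨_, rfl⟩
  obtain ⟨x, hxdef⟩ : ∃ x : ℝ,
      x = -(2 ^ b / (2 * π)) * Complex.arg g + 2 ^ b / (2 * π) * ω := ⟨_, rfl⟩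
  have hπ : (π : ℝ) ≠ 0 := Real.pi_ne_zero
  have h2bR : ((2:ℝ) ^ b) ≠ 0 := by positivity
  have hz' : Complex.exp (2 * π * Complex.I * s / 2 ^ b)
      = Complex.exp (((δ * s : ℝ) : ℂ) * Complex.I) := by
    congr 1
    rw [hδdef]
    push_cast
    ring
  have hψ : psiHat b g ω = Complex.exp (((δ * round x : ℝ) : ℂ) * Complex.I) := by
    unfold psiHat
    rw [← hxdef]
    congr 1
    rw [hδdef]
    push_cast
    ring
  rw [hz', hψ, re_eq, re_eq]
  have hcancel : δ * ((2:ℝ) ^ b / (2 * π)) = 1 := by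
    rw [hδdef, div_mul_div_comm, div_eq_one_iff_eq (by positivity)]
    ring
  have hx : δ * x = ω - Complex.arg g := by
    rw [hxdef]
    linear_combination (ω - Complex.arg g) * hcancel
  have e1 : δ * (s : ℝ) + Complex.arg g - ω = δ * (((s : ℤ) : ℝ) - x) := by
    push_cast
    linear_combination hx
  have e2 : δ * (round x : ℝ) + Complex.arg g - ω = δ * ((round x : ℝ) - x) := by
    linear_combination hx
  rw [e1, e2, hδdef]
  rw [hδdef] at hx
  exact mul_le_mul_of_nonneg_left (cos_key b hb x s) (norm_nonneg g)
lemma psiHat_period (b : ℕ) (g : ℂ) (ω : ℝ) : psiHat b g (ω + 2 * π) = psiHat b g ω := by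
  unfold psiHat
  have hπ : (π : ℝ) ≠ 0 := Real.pi_ne_zero
  have harg : (-(2 ^ b / (2 * π)) * Complex.arg g + (2 ^ b / (2 * π)) * (ω + 2 * π) : ℝ)
      = (-(2 ^ b / (2 * π)) * Complex.arg g + (2 ^ b / (2 * π)) * ω : ℝ) + ((2 ^ b : ℤ) : ℝ) := by
    push_cast
    field_simp
    ring
  rw [harg, round_add_intCast]
  rw [show Complex.I * ((2 * π / 2 ^ b : ℝ) : ℂ) *
      ((round ((-(2 ^ b / (2 * π)) * Complex.arg g + (2 ^ b / (2 * π)) * ω : ℝ)) + 2 ^ b : ℤ) : ℂ)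
      = Complex.I * ((2 * π / 2 ^ b : ℝ) : ℂ) *
        ((round ((-(2 ^ b / (2 * π)) * Complex.arg g + (2 ^ b / (2 * π)) * ω : ℝ)) : ℤ) : ℂ)
        + 2 * π * Complex.I by
    have h2b : ((2:ℂ) ^ b) ≠ 0 := pow_ne_zero _ two_ne_zero
    push_cast
    field_simp]
  rw [Complex.exp_add, Complex.exp_two_pi_mul_I, mul_one]
lemma row_le (b K : ℕ) (hb : 1 ≤ b) (f : Fin K → ℂ) (ψ : Fin K → ℂ)
    (hψ : ∀ k, ψ k ∈ Fb b) :
    ∃ ω ∈ Set.Ico (0 : ℝ) (2 * π),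
      ‖∑ k, ψ k * f k‖ ≤ ‖∑ k, psiHat b (f k) ω * f k‖ := by
  set S := ∑ k, ψ k * f k with hS
  set ω0 := Complex.arg S with hω0
  have habs1 : ∀ w : ℂ, ‖Complex.exp (-(ω0 : ℂ) * Complex.I) * w‖
      = ‖w‖ := by
    intro w
    rw [norm_mul, show -(ω0:ℂ) * Complex.I = ((-ω0 : ℝ) : ℂ) * Complex.I by push_cast; ring,
      Complex.norm_exp_ofReal_mul_I, one_mul]
  have h1 : ‖S‖ ≤ ‖∑ k, psiHat b (f k) ω0 * f k‖ := by
    have hstart : (Complex.exp (-(ω0 : ℂ) * Complex.I) * S) = (‖S‖ : ℂ) := by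
      conv_lhs => rw [← Complex.norm_mul_exp_arg_mul_I S]
      rw [← hω0, ← mul_assoc, mul_comm (Complex.exp _) _, mul_assoc, ← Complex.exp_add]
      simp
    calc ‖S‖ = (Complex.exp (-(ω0 : ℂ) * Complex.I) * S).re := by
          rw [hstart, Complex.ofReal_re]
      _ = ∑ k, (Complex.exp (-(ω0:ℂ) * Complex.I) * (ψ k * f k)).re := by
          rw [hS, Finset.mul_sum, Complex.re_sum]
      _ ≤ ∑ k, (Complex.exp (-(ω0:ℂ) * Complex.I) * (psiHat b (f k) ω0 * f k)).re :=
          Finset.sum_le_sum fun k _ => key_re b hb (f k) ω0 (ψ k) (hψ k)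
      _ = (Complex.exp (-(ω0:ℂ) * Complex.I) * (∑ k, psiHat b (f k) ω0 * f k)).re := by
          rw [Finset.mul_sum, Complex.re_sum]
      _ ≤ ‖Complex.exp (-(ω0:ℂ) * Complex.I) * (∑ k, psiHat b (f k) ω0 * f k)‖ :=
          Complex.re_le_norm _
      _ = ‖∑ k, psiHat b (f k) ω0 * f k‖ := habs1 _
  have hπ := Real.pi_pos
  by_cases h0 : 0 ≤ ω0
  · exact ⟨ω0, ⟨h0, lt_of_le_of_lt (Complex.arg_le_pi S) (by linarith)⟩, h1⟩
  · refine ⟨ω0 + 2 * π, ⟨by linarith [Complex.neg_pi_lt_arg S], by linarith [not_le.mp h0]⟩, ?_⟩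
    have : (∑ k, psiHat b (f k) (ω0 + 2 * π) * f k) = ∑ k, psiHat b (f k) ω0 * f k :=
      Finset.sum_congr rfl fun k _ => by rw [psiHat_period]
    rw [this]
    exact h1

theorem stmt2 {b K L : ℕ} (hb : 1 ≤ b) (hK : 1 ≤ K) (hL : 1 ≤ L)
    (g : Fin L → Fin K → ℂ) (hg : ∀ ℓ k, g ℓ k ≠ 0)
    (ωstar : Fin L → ℝ) (hωmem : ∀ ℓ, ωstar ℓ ∈ Set.Ico (0 : ℝ) (2 * π))
    (hωmax : ∀ ℓ, ∀ ω ∈ Set.Ico (0 : ℝ) (2 * π),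
      ‖∑ k, psiHat b (g ℓ k) ω * g ℓ k‖ ^ 2 ≤
        ‖∑ k, psiHat b (g ℓ k) (ωstar ℓ) * g ℓ k‖ ^ 2) :
    ∀ ψ : Fin L → Fin K → ℂ, (∀ ℓ k, ψ ℓ k ∈ Fb b) →
      gain g ψ ≤ gain g (fun ℓ k => psiHat b (g ℓ k) (ωstar ℓ)) := by
  intro ψ hψ
  unfold gain
  apply Finset.sum_le_sum
  intro ℓ _
  obtain ⟨ω, hωmem', hle⟩ := row_le b K hb (g ℓ) (ψ ℓ) (hψ ℓ)
  calc ‖∑ k, ψ ℓ k * g ℓ k‖ ^ 2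
      ≤ ‖∑ k, psiHat b (g ℓ k) ω * g ℓ k‖ ^ 2 :=
        pow_le_pow_left₀ (norm_nonneg _) hle 2
    _ ≤ ‖∑ k, psiHat b (g ℓ k) (ωstar ℓ) * g ℓ k‖ ^ 2 := hωmax ℓ ω hωmem'
end

section
/- Let L ≥ 1 and let a_1, …, a_L and b_1, …, b_L be real numbers such that 0 < m_a ≤ a_ℓ ≤ M_a and 0 < m_b ≤ b_ℓ ≤ M_b for all ℓ. Set m = (m_a·m_b)/(M_a·M_b). Then (Σ_{ℓ=1}^L a_ℓ·b_ℓ)² ≥ 4·(m^{1/2} + m^{−1/2})^{−2} · (Σ_{ℓ=1}^L a_ℓ²) · (Σ_{ℓ=1}^L b_ℓ²) (the reversed Cauchy–Schwarz inequality of Pólya–Szegő type). -/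
theorem stmt13 {L : ℕ} (hL : 1 ≤ L) (a b : Fin L → ℝ)
    (ma Ma mb Mb : ℝ) (hma : 0 < ma) (hmb : 0 < mb)
    (ha : ∀ ℓ, ma ≤ a ℓ ∧ a ℓ ≤ Ma) (hb : ∀ ℓ, mb ≤ b ℓ ∧ b ℓ ≤ Mb) :
    4 * ((Real.sqrt ((ma * mb) / (Ma * Mb)) +
          (Real.sqrt ((ma * mb) / (Ma * Mb)))⁻¹) ^ 2)⁻¹ *
        (∑ ℓ, a ℓ ^ 2) * (∑ ℓ, b ℓ ^ 2) ≤ (∑ ℓ, a ℓ * b ℓ) ^ 2 := by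
  have ℓ0 : Fin L := ⟨0, hL⟩
  have h1 : ma ≤ Ma := le_trans (ha ℓ0).1 (ha ℓ0).2
  have h2 : mb ≤ Mb := le_trans (hb ℓ0).1 (hb ℓ0).2
  have hMa : 0 < Ma := hma.trans_le h1
  have hMb : 0 < Mb := hmb.trans_le h2
  set s : ℝ := Real.sqrt ((ma * mb) / (Ma * Mb)) with hsdef
  set A := ∑ ℓ, a ℓ ^ 2 with hAdef
  set B := ∑ ℓ, b ℓ ^ 2 with hBdef
  set C := ∑ ℓ, a ℓ * b ℓ with hCdef
  set m := ma / Mb with hmdef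
  set M := Ma / mb with hMdef
  have hm : 0 < m := div_pos hma hMb
  have hM : 0 < M := div_pos hMa hmb
  have hA : 0 ≤ A := Finset.sum_nonneg fun ℓ _ => sq_nonneg _
  have hB : 0 ≤ B := Finset.sum_nonneg fun ℓ _ => sq_nonneg _
  have hC : 0 ≤ C := Finset.sum_nonneg fun ℓ _ =>
    mul_nonneg (le_trans hma.le (ha ℓ).1) (le_trans hmb.le (hb ℓ).1)
  have key : A + m * M * B ≤ (m + M) * C := by
    have h : ∑ ℓ, (a ℓ - m * b ℓ) * (a ℓ - M * b ℓ) ≤ 0 := by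
      apply Finset.sum_nonpos
      intro ℓ _
      have hb1 : m * b ℓ ≤ a ℓ :=
        calc m * b ℓ ≤ m * Mb := mul_le_mul_of_nonneg_left (hb ℓ).2 hm.le
          _ = ma := div_mul_cancel₀ ma hMb.ne'
          _ ≤ a ℓ := (ha ℓ).1
      have hb2 : a ℓ ≤ M * b ℓ :=
        calc a ℓ ≤ Ma := (ha ℓ).2
          _ = M * mb := (div_mul_cancel₀ Ma hmb.ne').symm
          _ ≤ M * b ℓ := mul_le_mul_of_nonneg_left (hb ℓ).1 hM.le
      exact mul_nonpos_of_nonneg_of_nonpos (by linarith) (by linarith)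
    have expand : ∑ ℓ, (a ℓ - m * b ℓ) * (a ℓ - M * b ℓ)
        = A - (m + M) * C + m * M * B := by
      rw [hAdef, hBdef, hCdef, Finset.mul_sum, Finset.mul_sum,
        ← Finset.sum_sub_distrib, ← Finset.sum_add_distrib]
      exact Finset.sum_congr rfl fun ℓ _ => by ring
    linarith [expand ▸ h]
  have key2 : 4 * (m * M) * A * B ≤ ((m + M) * C) ^ 2 := by
    have h4 : (A + m * M * B) ^ 2 ≤ ((m + M) * C) ^ 2 :=
      pow_le_pow_left₀ (by positivity) key 2
    nlinarith [sq_nonneg (A - m * M * B)]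
  have hs0 : 0 < s := Real.sqrt_pos.mpr (by positivity)
  have hs2 : s ^ 2 * M = m := by
    rw [hsdef, Real.sq_sqrt (by positivity), hmdef, hMdef]
    field_simp [hma.ne', hmb.ne', hMa.ne', hMb.ne']
  have hinv : ((s + s⁻¹) ^ 2)⁻¹ = m * M / (m + M) ^ 2 := by
    have heq : (s + s⁻¹) ^ 2 = (m + M) ^ 2 / (m * M) := by
      field_simp
      linear_combination (s ^ 2 * m - M) * hs2
    rw [heq, inv_div]
  have h5 : 4 * (m * M) * A * B ≤ (m + M) ^ 2 * C ^ 2 := by nlinarith [key2]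
  calc 4 * ((s + s⁻¹) ^ 2)⁻¹ * A * B
      = 4 * (m * M / (m + M) ^ 2) * A * B := by rw [hinv]
    _ = (4 * (m * M) * A * B) / (m + M) ^ 2 := by ring
    _ ≤ ((m + M) ^ 2 * C ^ 2) / (m + M) ^ 2 := by gcongr
    _ = C ^ 2 := by field_simp
end
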